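/- arXiv:math/0309378 — 2 statements merged into one kernel-verified Lean document; each statement's English description precedes it below -/
import Mathlib

section
/- Let K be a field and let A : W₁ ⊕ W₂ → V₁ ⊕ V₂, B : U₁ ⊕ U₂ → W₁ ⊕ W₂ be block upper triangular linear maps with blocks A₁₁, A₂₁, A₂₂ and B₁₁, B₂₁, B₂₂ satisfying A ∘ B = 0. Assume the quotient complex is exact: ker A₂₂ = im B₂₂. Then the map ψ̄ : ker A / im B → ker A₁₁ / im B₁₁ induced by (w₁, w₂) ↦ w₁ - B₂₁ u₂ (where B₂₂ u₂ = w₂) is injective. -/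
theorem stmt2 (K : Type*) [Field K]
    (U₁ U₂ W₁ W₂ V₁ V₂ : Type*)
    [AddCommGroup U₁] [AddCommGroup U₂] [AddCommGroup W₁] [AddCommGroup W₂]
    [AddCommGroup V₁] [AddCommGroup V₂]
    [Module K U₁] [Module K U₂] [Module K W₁] [Module K W₂] [Module K V₁] [Module K V₂]
    (A₁₁ : W₁ →ₗ[K] V₁) (A₂₁ : W₂ →ₗ[K] V₁) (A₂₂ : W₂ →ₗ[K] V₂)
    (B₁₁ : U₁ →ₗ[K] W₁) (B₂₁ : U₂ →ₗ[K] W₁) (B₂₂ : U₂ →ₗ[K] W₂)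
    (A : (W₁ × W₂) →ₗ[K] V₁ × V₂) (B : (U₁ × U₂) →ₗ[K] W₁ × W₂)
    (hA : ∀ w₁ w₂, A (w₁, w₂) = (A₁₁ w₁ + A₂₁ w₂, A₂₂ w₂))
    (hB : ∀ u₁ u₂, B (u₁, u₂) = (B₁₁ u₁ + B₂₁ u₂, B₂₂ u₂))
    (hAB : A ∘ₗ B = 0)
    (hexact : LinearMap.ker A₂₂ = LinearMap.range B₂₂)
    :
    ∀ ψ : (LinearMap.ker A ⧸ (LinearMap.range B).comap (LinearMap.ker A).subtype) →ₗ[K]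
          (LinearMap.ker A₁₁ ⧸ (LinearMap.range B₁₁).comap (LinearMap.ker A₁₁).subtype),
      (∀ (w : LinearMap.ker A) (u₂ : U₂), B₂₂ u₂ = (w : W₁ × W₂).2 →
        ∀ (h : (w : W₁ × W₂).1 - B₂₁ u₂ ∈ LinearMap.ker A₁₁),
          ψ (Submodule.Quotient.mk w) =
            Submodule.Quotient.mk ⟨(w : W₁ × W₂).1 - B₂₁ u₂, h⟩) →
      Function.Injective ψ := by
  intro ψ hψ
  rw [injective_iff_map_eq_zero]
  intro z hz
  obtain ⟨w, rfl⟩ := Submodule.Quotient.mk_surjective _ z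
  have hw : A (w : W₁ × W₂) = 0 := w.2
  have hw' : A ((w : W₁ × W₂).1, (w : W₁ × W₂).2) = 0 := by simpa using hw
  rw [hA] at hw'
  have h1 : A₁₁ (w : W₁ × W₂).1 + A₂₁ (w : W₁ × W₂).2 = 0 := congrArg Prod.fst hw'
  have h2 : A₂₂ (w : W₁ × W₂).2 = 0 := congrArg Prod.snd hw'
  have : (w : W₁ × W₂).2 ∈ LinearMap.range B₂₂ := hexact ▸ h2
  obtain ⟨u₂, hu₂⟩ := this
  have hAB0 : A (B (0, u₂)) = 0 := by
    have := congrArg (fun f => f ((0 : U₁), u₂)) hAB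
    simpa using this
  rw [hB] at hAB0
  simp only [map_zero, zero_add] at hAB0
  rw [hA] at hAB0
  have h3 : A₁₁ (B₂₁ u₂) + A₂₁ (B₂₂ u₂) = 0 := congrArg Prod.fst hAB0
  have hmem : (w : W₁ × W₂).1 - B₂₁ u₂ ∈ LinearMap.ker A₁₁ := by
    rw [LinearMap.mem_ker, map_sub]
    rw [hu₂] at h3
    rw [eq_neg_of_add_eq_zero_left h1, eq_neg_of_add_eq_zero_left h3]
    simp
  rw [hψ w u₂ hu₂ hmem, Submodule.Quotient.mk_eq_zero] at hz
  obtain ⟨u₁, hu₁⟩ := hz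
  rw [Submodule.Quotient.mk_eq_zero]
  refine ⟨(u₁, u₂), ?_⟩
  rw [hB]
  have hu₁' : B₁₁ u₁ = (w : W₁ × W₂).1 - B₂₁ u₂ := hu₁
  ext
  · simp [hu₁']
  · simpa using hu₂
end

section
/- Let K be a field and let A : W₁ ⊕ W₂ → V₁ ⊕ V₂, B : U₁ ⊕ U₂ → W₁ ⊕ W₂ be block upper triangular linear maps with A ∘ B = 0 and with the quotient complex exact (ker A₂₂ = im B₂₂). If moreover the K-vector spaces ker A / im B and ker A₁₁ / im B₁₁ are finite-dimensional of the same dimension, then the induced map ψ̄ : ker A / im B → ker A₁₁ / im B₁₁ is an isomorphism of K-vector spaces. -/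
theorem stmt3 (K : Type*) [Field K]
    (U₁ U₂ W₁ W₂ V₁ V₂ : Type*)
    [AddCommGroup U₁] [AddCommGroup U₂] [AddCommGroup W₁] [AddCommGroup W₂]
    [AddCommGroup V₁] [AddCommGroup V₂]
    [Module K U₁] [Module K U₂] [Module K W₁] [Module K W₂] [Module K V₁] [Module K V₂]
    (A₁₁ : W₁ →ₗ[K] V₁) (A₂₁ : W₂ →ₗ[K] V₁) (A₂₂ : W₂ →ₗ[K] V₂)
    (B₁₁ : U₁ →ₗ[K] W₁) (B₂₁ : U₂ →ₗ[K] W₁) (B₂₂ : U₂ →ₗ[K] W₂)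
    (A : (W₁ × W₂) →ₗ[K] V₁ × V₂) (B : (U₁ × U₂) →ₗ[K] W₁ × W₂)
    (hA : ∀ w₁ w₂, A (w₁, w₂) = (A₁₁ w₁ + A₂₁ w₂, A₂₂ w₂))
    (hB : ∀ u₁ u₂, B (u₁, u₂) = (B₁₁ u₁ + B₂₁ u₂, B₂₂ u₂))
    (hAB : A ∘ₗ B = 0)
    (hexact : LinearMap.ker A₂₂ = LinearMap.range B₂₂)
    [FiniteDimensional K (LinearMap.ker A ⧸ (LinearMap.range B).comap (LinearMap.ker A).subtype)]
    [FiniteDimensional K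
      (LinearMap.ker A₁₁ ⧸ (LinearMap.range B₁₁).comap (LinearMap.ker A₁₁).subtype)]
    (hdim : Module.finrank K
        (LinearMap.ker A ⧸ (LinearMap.range B).comap (LinearMap.ker A).subtype) =
      Module.finrank K
        (LinearMap.ker A₁₁ ⧸ (LinearMap.range B₁₁).comap (LinearMap.ker A₁₁).subtype)) :
    ∀ ψ : (LinearMap.ker A ⧸ (LinearMap.range B).comap (LinearMap.ker A).subtype) →ₗ[K]
          (LinearMap.ker A₁₁ ⧸ (LinearMap.range B₁₁).comap (LinearMap.ker A₁₁).subtype),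
      (∀ (w : LinearMap.ker A) (u₂ : U₂), B₂₂ u₂ = (w : W₁ × W₂).2 →
        ∀ (h : (w : W₁ × W₂).1 - B₂₁ u₂ ∈ LinearMap.ker A₁₁),
          ψ (Submodule.Quotient.mk w) =
            Submodule.Quotient.mk ⟨(w : W₁ × W₂).1 - B₂₁ u₂, h⟩) →
      Function.Bijective ψ := by

  intro ψ hψ
  have hinj : Function.Injective ψ := by
    rw [← LinearMap.ker_eq_bot, eq_bot_iff]
    rintro x hx
    obtain ⟨w, rfl⟩ := Submodule.Quotient.mk_surjective _ x
    have hw : A (w : W₁ × W₂) = 0 := w.2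
    have hw' : A ((w : W₁ × W₂).1, (w : W₁ × W₂).2) = 0 := by
      simp [hw]
    rw [hA] at hw'
    have h1 : A₁₁ (w : W₁ × W₂).1 + A₂₁ (w : W₁ × W₂).2 = 0 := congrArg Prod.fst hw'
    have h2 : A₂₂ (w : W₁ × W₂).2 = 0 := congrArg Prod.snd hw'
    have : (w : W₁ × W₂).2 ∈ LinearMap.range B₂₂ := hexact ▸ h2
    obtain ⟨u₂, hu₂⟩ := this
    have hABu : A (B (0, u₂)) = 0 := by
      have := LinearMap.congr_fun hAB (0, u₂)
      simpa using this
    rw [hB] at hABu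
    simp only [map_zero, zero_add] at hABu
    rw [hA] at hABu
    have h3 : A₁₁ (B₂₁ u₂) + A₂₁ (B₂₂ u₂) = 0 := congrArg Prod.fst hABu
    have hk : (w : W₁ × W₂).1 - B₂₁ u₂ ∈ LinearMap.ker A₁₁ := by
      rw [hu₂] at h3
      rw [LinearMap.mem_ker, map_sub, sub_eq_zero, eq_neg_of_add_eq_zero_left h1,
        eq_neg_of_add_eq_zero_left h3]
    have hψw := hψ w u₂ hu₂ hk
    rw [LinearMap.mem_ker, hψw, Submodule.Quotient.mk_eq_zero, Submodule.mem_comap] at hx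
    obtain ⟨u₁, hu₁⟩ := hx
    rw [Submodule.mem_bot, Submodule.Quotient.mk_eq_zero, Submodule.mem_comap]
    refine ⟨(u₁, u₂), ?_⟩
    rw [hB]
    have : (B₁₁ u₁ : W₁) = (w : W₁ × W₂).1 - B₂₁ u₂ := hu₁
    ext
    · simp [this]
    · simpa using hu₂
  exact ⟨hinj, (LinearMap.injective_iff_surjective_of_finrank_eq_finrank hdim).mp hinj⟩
end
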